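/- If M ∈ ℝ^{N×N} has nonpositive off-diagonal entries and all its eigenvalues have strictly positive real part (so M is an M-matrix of full rank), then there exists a positive diagonal matrix D such that DM is strictly column diagonally dominant. -/

import Mathlib

open Matrix Filter

attribute [local instance] Matrix.linftyOpNormedRing Matrix.linftyOpNormedAlgebra


lemma pow_entries_nonneg {n : ℕ} (A : Matrix (Fin n) (Fin n) ℝ) (hA : ∀ i j, 0 ≤ A i j) :
    ∀ k i j, (0:ℝ) ≤ (A ^ k) i j := by
  intro k
  induction k with
  | zero => intro i j; by_cases h : i = j <;> simp [pow_zero, Matrix.one_apply, h]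
  | succ m ih =>
    intro i j
    rw [pow_succ, Matrix.mul_apply]
    exact Finset.sum_nonneg fun l _ => mul_nonneg (ih i l) (hA l j)

lemma entry_le_linfty {n : ℕ} (X : Matrix (Fin n) (Fin n) ℂ) (i j : Fin n) :
    ‖X i j‖ ≤ ‖X‖ := by
  have h1 : ‖X i j‖₊ ≤ ∑ j', ‖X i j'‖₊ :=
    Finset.single_le_sum (f := fun j' => ‖X i j'‖₊) (fun _ _ => zero_le) (Finset.mem_univ j)
  have h2 : (∑ j', ‖X i j'‖₊) ≤ ‖X‖₊ := by
    rw [Matrix.linfty_opNNNorm_def]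
    exact Finset.le_sup (f := fun i => ∑ j', ‖X i j'‖₊) (Finset.mem_univ i)
  exact_mod_cast h1.trans h2

lemma map_mul_ofReal {n : ℕ} (X Y : Matrix (Fin n) (Fin n) ℝ) :
    (X * Y).map Complex.ofReal = X.map Complex.ofReal * Y.map Complex.ofReal := by
  ext i j
  simp [Matrix.map_apply, Matrix.mul_apply]

lemma map_pow_ofReal {n : ℕ} (A : Matrix (Fin n) (Fin n) ℝ) (p : ℕ) :
    (A ^ p).map Complex.ofReal = (A.map Complex.ofReal) ^ p := by
  induction p with
  | zero => simp [Matrix.map_one]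
  | succ q ih => rw [pow_succ, pow_succ, ← ih, map_mul_ofReal]

lemma key_nonneg {n : ℕ} (A C : Matrix (Fin n) (Fin n) ℝ)
    (hA : ∀ i j, 0 ≤ A i j)
    (hρ : spectralRadius ℂ (A.map Complex.ofReal) < 1)
    (hC : (1 - A) * C = 1) :
    ∀ i j, 0 ≤ C i j := by
  set Ac := A.map Complex.ofReal with hAc
  have hG := spectrum.pow_nnnorm_pow_one_div_tendsto_nhds_spectralRadius Ac
  have hev : ∀ᶠ m : ℕ in atTop, (‖Ac ^ m‖₊ : ENNReal) ^ (1/(m:ℝ)) < 1 :=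
    hG.eventually_lt_const hρ
  obtain ⟨m, hm1, hm⟩ : ∃ m : ℕ, 1 ≤ m ∧ (‖Ac ^ m‖₊ : ENNReal) ^ (1/(m:ℝ)) < 1 := by
    obtain ⟨m0, hm0⟩ := hev.exists_forall_of_atTop
    exact ⟨max m0 1, le_max_right _ _, hm0 _ (le_max_left _ _)⟩
  have hmn : (0:ℝ) < 1/(m:ℝ) := by positivity
  have hc : ‖Ac ^ m‖ < 1 := by
    by_contra h
    push_neg at h
    have h1 : (1:ENNReal) ≤ (‖Ac ^ m‖₊ : ENNReal) := by exact_mod_cast h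
    exact absurd hm (not_lt.mpr (ENNReal.one_le_rpow h1 hmn))
  have hc0 : 0 ≤ ‖Ac ^ m‖ := norm_nonneg _
  have geom : ∀ p : ℕ, C = (∑ k ∈ Finset.range p, A ^ k) + A ^ p * C := by
    intro p
    have h1 : (∑ k ∈ Finset.range p, A ^ k) * (1 - A) = 1 - A ^ p := by
      calc (∑ k ∈ Finset.range p, A ^ k) * (1 - A)
          = -((∑ k ∈ Finset.range p, A ^ k) * (A - 1)) := by rw [← mul_neg, neg_sub]
        _ = 1 - A ^ p := by rw [geom_sum_mul, neg_sub]
    calc C = 1 * C := (one_mul C).symm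
    _ = ((1 - A ^ p) + A ^ p) * C := by rw [sub_add_cancel]
    _ = (∑ k ∈ Finset.range p, A ^ k) * ((1 - A) * C) + A ^ p * C := by
        rw [← h1, add_mul, mul_assoc]
    _ = (∑ k ∈ Finset.range p, A ^ k) + A ^ p * C := by rw [hC, mul_one]
  intro i j
  by_contra hneg
  push_neg at hneg
  set Cc := C.map Complex.ofReal with hCc
  have hmapmul : ∀ p : ℕ, (A ^ p * C).map Complex.ofReal = Ac ^ p * Cc := by
    intro p
    rw [map_mul_ofReal, map_pow_ofReal]
  have hbound : ∀ p : ℕ, |(A ^ p * C) i j| ≤ ‖Ac ^ p‖ * ‖Cc‖ := by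
    intro p
    have h2 : ‖((A ^ p * C).map Complex.ofReal) i j‖ = |(A ^ p * C) i j| := by
      simp [Matrix.map_apply, Complex.norm_real]
    calc |(A ^ p * C) i j| = ‖((A ^ p * C).map Complex.ofReal) i j‖ := h2.symm
    _ ≤ ‖(A ^ p * C).map Complex.ofReal‖ := entry_le_linfty _ i j
    _ = ‖Ac ^ p * Cc‖ := by rw [hmapmul p]
    _ ≤ ‖Ac ^ p‖ * ‖Cc‖ := Matrix.linfty_opNorm_mul _ _
  obtain ⟨k0, hk0⟩ : ∃ k : ℕ, ‖Ac ^ m‖ ^ k < (-C i j) / (‖Cc‖ + 1) := by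
    apply exists_pow_lt_of_lt_one _ hc
    have : 0 < -C i j := by linarith
    positivity
  set k := k0 + 1 with hkdef
  have hkle : ‖Ac ^ m‖ ^ k ≤ ‖Ac ^ m‖ ^ k0 := by
    rw [hkdef, pow_succ]
    nlinarith [pow_nonneg hc0 k0]
  have hCC : (0:ℝ) < ‖Cc‖ + 1 := by positivity
  have hkk : ‖Ac ^ m‖ ^ k * (‖Cc‖ + 1) < -C i j := by
    have := (lt_div_iff₀ hCC).mp (lt_of_le_of_lt hkle hk0)
    linarith
  have hpow : ‖Ac ^ (m * k)‖ ≤ ‖Ac ^ m‖ ^ k := by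
    rw [pow_mul]
    exact norm_pow_le' _ (Nat.succ_pos k0)
  have hge : (A ^ (m * k) * C) i j ≤ C i j := by
    have h := congrFun (congrFun (geom (m * k)) i) j
    rw [Matrix.add_apply] at h
    have hsum : 0 ≤ (∑ l ∈ Finset.range (m*k), A ^ l) i j := by
      rw [Matrix.sum_apply]
      exact Finset.sum_nonneg fun l _ => pow_entries_nonneg A hA l i j
    linarith
  have habs := hbound (m * k)
  have h1 : ‖Ac ^ (m*k)‖ * ‖Cc‖ ≤ ‖Ac ^ m‖ ^ k * (‖Cc‖ + 1) := by
    apply mul_le_mul hpow (by linarith) (norm_nonneg _)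
    positivity
  have h2 : |(A ^ (m*k) * C) i j| < -C i j := lt_of_le_of_lt (habs.trans h1) hkk
  have h3 : -(A ^ (m*k) * C) i j ≤ |(A ^ (m*k) * C) i j| := neg_le_abs _
  linarith

lemma map_sub_smul_one {n : ℕ} (X : Matrix (Fin n) (Fin n) ℝ) (c : ℝ) :
    ((c • (1 : Matrix (Fin n) (Fin n) ℝ) - X).map Complex.ofReal)
      = (c : ℂ) • (1 : Matrix (Fin n) (Fin n) ℂ) - X.map Complex.ofReal := by
  ext i j
  by_cases h : i = j <;>
    simp [Matrix.map_apply, Matrix.sub_apply, Matrix.smul_apply, Matrix.one_apply, h]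

/-- If M has nonpositive off-diagonal entries and all eigenvalues with
strictly positive real part (full-rank M-matrix), then some positive diagonal D makes
DM strictly column diagonally dominant. -/
theorem stmt2 {N : ℕ} (M : Matrix (Fin N) (Fin N) ℝ)
    (hoff : ∀ i j, i ≠ j → M i j ≤ 0)
    (heig : ∀ μ ∈ spectrum ℂ (M.map Complex.ofReal), 0 < μ.re) :
    ∃ d : Fin N → ℝ, (∀ i, 0 < d i) ∧
      ∀ j, ∑ i ∈ Finset.univ.erase j, |(Matrix.diagonal d * M) i j| <
        |(Matrix.diagonal d * M) j j| := by
  rcases Nat.eq_zero_or_pos N with hN | hN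
  · subst hN
    exact ⟨fun _ => 1, fun i => i.elim0, fun j => j.elim0⟩
  haveI : Nonempty (Fin N) := ⟨⟨0, hN⟩⟩
  set Mc := M.map Complex.ofReal with hMc
  -- choose s
  have hfin : (spectrum ℂ Mc).Finite := Matrix.finite_spectrum Mc
  obtain ⟨b1, hb1⟩ : ∃ b1 : ℝ, ∀ μ ∈ spectrum ℂ Mc, ‖μ‖ ^ 2 / (2 * μ.re) ≤ b1 := by
    obtain ⟨b, hb⟩ := (hfin.image (fun μ => ‖μ‖ ^ 2 / (2 * μ.re))).bddAbove
    exact ⟨b, fun μ hμ => hb (Set.mem_image_of_mem _ hμ)⟩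
  obtain ⟨b2, hb2⟩ : ∃ b2 : ℝ, ∀ i, M i i ≤ b2 := by
    obtain ⟨b, hb⟩ := (Set.finite_range (fun i => M i i)).bddAbove
    exact ⟨b, fun i => hb (Set.mem_range_self i)⟩
  set s : ℝ := max b1 b2 + 1 with hs
  have hsb1 : b1 < s := by rw [hs]; linarith [le_max_left b1 b2]
  have hsb2 : b2 < s := by rw [hs]; linarith [le_max_right b1 b2]
  have hs0 : 0 < s := by
    obtain ⟨μ, hμ⟩ := spectrum.nonempty Mc
    have h1 : 0 ≤ ‖μ‖ ^ 2 / (2 * μ.re) := by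
      have := heig μ hμ; positivity
    linarith [hb1 μ hμ]
  have hsspec : ∀ μ ∈ spectrum ℂ Mc, ‖μ‖ ^ 2 < 2 * s * μ.re := by
    intro μ hμ
    have h1 := hb1 μ hμ
    have h2 := heig μ hμ
    rw [div_le_iff₀ (by linarith)] at h1
    nlinarith
  -- decompose
  set A : Matrix (Fin N) (Fin N) ℝ := s⁻¹ • (s • (1 : Matrix (Fin N) (Fin N) ℝ) - M) with hAdef
  have hA : ∀ i j, 0 ≤ A i j := by
    intro i j
    have hval : A i j = s⁻¹ * (s * (if i = j then (1:ℝ) else 0) - M i j) := by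
      simp [hAdef, Matrix.smul_apply, Matrix.sub_apply, Matrix.one_apply, smul_eq_mul]
    have h2 : 0 ≤ s⁻¹ := by positivity
    by_cases h : i = j
    · subst h
      have hval2 : A i i = s⁻¹ * (s - M i i) := by rw [hval]; norm_num
      have := hb2 i
      rw [hval2]
      nlinarith
    · have hval2 : A i j = s⁻¹ * (0 - M i j) := by rw [hval, if_neg h]; ring_nf
      have := hoff i j h
      rw [hval2]
      nlinarith
  have hM : M = s • ((1 : Matrix (Fin N) (Fin N) ℝ) - A) := by
    rw [hAdef, smul_sub, smul_smul, mul_inv_cancel₀ hs0.ne', one_smul, sub_sub_cancel]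
  -- spectrum of Ac
  set Ac := A.map Complex.ofReal with hAc
  have hAcEq : Ac = ((s : ℂ))⁻¹ • ((s:ℂ) • (1 : Matrix (Fin N) (Fin N) ℂ) - Mc) := by
    rw [hAc, hAdef]
    ext i j
    by_cases h : i = j <;>
      simp [Matrix.map_apply, Matrix.sub_apply, Matrix.smul_apply, Matrix.one_apply, h, hMc]
  have hsC : (s : ℂ) ≠ 0 := by exact_mod_cast hs0.ne'
  have hspecA : ∀ μ ∈ spectrum ℂ Ac, ‖μ‖₊ < 1 := by
    intro μ hμ
    set lam : ℂ := s * (1 - μ) with hlam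
    have hlamspec : lam ∈ spectrum ℂ Mc := by
      rw [spectrum.mem_iff] at hμ ⊢
      intro hcon
      apply hμ
      have hrw : algebraMap ℂ (Matrix (Fin N) (Fin N) ℂ) μ - Ac
          = (-(s:ℂ)⁻¹) • (algebraMap ℂ (Matrix (Fin N) (Fin N) ℂ) lam - Mc) := by
        rw [hAcEq, Algebra.algebraMap_eq_smul_one, Algebra.algebraMap_eq_smul_one, hlam]
        match_scalars
        · field_simp
          ring
        · field_simp
      rw [hrw]
      have hne : (-(s:ℂ)⁻¹) ≠ 0 := by simpa using hsC
      rw [Matrix.isUnit_iff_isUnit_det, Matrix.det_smul]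
      exact ((isUnit_iff_ne_zero.mpr hne).pow _).mul
        ((Matrix.isUnit_iff_isUnit_det _).mp hcon)
    have h2 := hsspec lam hlamspec
    have h3 := heig lam hlamspec
    -- ‖μ‖ < 1
    have hre : lam.re = s * (1 - μ.re) := by simp [hlam]
    have him : lam.im = -s * μ.im := by simp [hlam]
    have habs : ‖lam‖ ^ 2 = lam.re^2 + lam.im^2 := by
      rw [Complex.sq_norm, Complex.normSq_apply]; ring
    have hnorm2 : ‖μ‖^2 = μ.re^2 + μ.im^2 := by
      rw [Complex.sq_norm, Complex.normSq_apply]; ring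
    have hq : (1-μ.re)^2 + μ.im^2 < 2*(1-μ.re) := by
      rw [habs, hre, him] at h2
      have hx : s^2 * (((1-μ.re)^2 + μ.im^2) - 2*(1-μ.re)) < 0 := by nlinarith [h2]
      nlinarith [mul_pos hs0 hs0, hx]
    have hmun : ‖μ‖ < 1 := by nlinarith [norm_nonneg μ, hnorm2]
    exact_mod_cast hmun
  have hρ : spectralRadius ℂ Ac < 1 := by
    have hfinA : (spectrum ℂ Ac).Finite := Matrix.finite_spectrum Ac
    set r0 : NNReal := hfinA.toFinset.sup (fun μ => ‖μ‖₊) with hr0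
    have hr0lt : r0 < 1 := by
      rw [hr0, Finset.sup_lt_iff (by norm_num : (⊥ : NNReal) < 1)]
      intro μ hμ
      exact hspecA μ (hfinA.mem_toFinset.mp hμ)
    obtain ⟨r', hr1, hr2⟩ := exists_between hr0lt
    have := spectrum.spectralRadius_lt_of_forall_lt Ac (r := r') (fun z hz => by
      calc ‖z‖₊ ≤ r0 := Finset.le_sup (f := fun μ => ‖μ‖₊) (hfinA.mem_toFinset.mpr hz)
      _ < r' := hr1)
    calc spectralRadius ℂ Ac < (r' : ENNReal) := this
    _ < 1 := by exact_mod_cast hr2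
  -- invertibility of 1 - A over ℝ
  have hdet : IsUnit (1 - A).det := by
    have h1 : (1 : ℂ) ∉ spectrum ℂ Ac := fun h => absurd (hspecA 1 h) (by simp)
    rw [spectrum.notMem_iff] at h1
    have h2' : ((1 : Matrix (Fin N) (Fin N) ℝ) - A).map Complex.ofReal
        = 1 - Ac := by simpa using map_sub_smul_one A 1
    rw [_root_.map_one, ← h2', Matrix.isUnit_iff_isUnit_det] at h1
    have h3 : (((1 : Matrix (Fin N) (Fin N) ℝ) - A).map Complex.ofReal).det
        = ((1 - A).det : ℂ) := by
      rw [show ((1 : Matrix (Fin N) (Fin N) ℝ) - A).map Complex.ofReal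
        = (Complex.ofRealHom : ℝ →+* ℂ).mapMatrix (1 - A) from rfl, ← RingHom.map_det]
      rfl
    rw [h3, isUnit_iff_ne_zero] at h1
    rw [isUnit_iff_ne_zero]
    exact_mod_cast h1
  set C : Matrix (Fin N) (Fin N) ℝ := (1 - A)⁻¹ with hCdef
  have hC1 : (1 - A) * C = 1 := Matrix.mul_nonsing_inv _ hdet
  have hC2 : C * (1 - A) = 1 := Matrix.nonsing_inv_mul _ hdet
  have hCpos : ∀ i j, 0 ≤ C i j := key_nonneg A C hA hρ hC1
  -- define d
  set d : Fin N → ℝ := fun i => s⁻¹ * ∑ l, C l i with hd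
  have hdpos : ∀ i, 0 < d i := by
    intro i
    have hsum : 0 < ∑ l, C l i := by
      apply Finset.sum_pos' (fun l _ => hCpos l i)
      by_contra hcon
      push_neg at hcon
      have hz : ∀ l, C l i = 0 := fun l =>
        le_antisymm (hcon l (Finset.mem_univ l)) (hCpos l i)
      have := congrFun (congrFun hC1 i) i
      rw [Matrix.mul_apply] at this
      simp only [hz, mul_zero, Finset.sum_const_zero] at this
      rw [Matrix.one_apply_eq] at this
      norm_num at this
    rw [hd]
    positivity
  refine ⟨d, hdpos, fun j => ?_⟩
  -- key identity : ∑ i, d i * M i j = 1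
  have hCM : C * M = s • (1 : Matrix (Fin N) (Fin N) ℝ) := by
    rw [hM, Matrix.mul_smul, hC2]
  have hkey : ∑ i, d i * M i j = 1 := by
    have h1 : ∑ i, d i * M i j = s⁻¹ * ∑ l, (C * M) l j := by
      have e1 : ∀ i, d i * M i j = s⁻¹ * ∑ l, C l i * M i j := by
        intro i
        rw [hd]
        rw [mul_assoc, Finset.sum_mul]
      calc ∑ i, d i * M i j = ∑ i, s⁻¹ * ∑ l, C l i * M i j :=
            Finset.sum_congr rfl fun i _ => e1 i
      _ = s⁻¹ * ∑ i, ∑ l, C l i * M i j := by rw [Finset.mul_sum]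
      _ = s⁻¹ * ∑ l, ∑ i, C l i * M i j := by rw [Finset.sum_comm]
      _ = s⁻¹ * ∑ l, (C * M) l j := by simp [Matrix.mul_apply]
    rw [h1, hCM]
    have : ∑ l, (s • (1 : Matrix (Fin N) (Fin N) ℝ)) l j = s := by
      simp [Matrix.smul_apply, Matrix.one_apply, Finset.sum_ite_eq]
    rw [this, inv_mul_cancel₀ hs0.ne']
  -- conclude
  simp only [Matrix.diagonal_mul]
  have hT : ∑ i ∈ Finset.univ.erase j, |d i * M i j|
      = ∑ i ∈ Finset.univ.erase j, -(d i * M i j) := by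
    apply Finset.sum_congr rfl
    intro i hi
    have hij : i ≠ j := Finset.ne_of_mem_erase hi
    exact abs_of_nonpos (mul_nonpos_of_nonneg_of_nonpos (hdpos i).le (hoff i j hij))
  have hsplit : d j * M j j + ∑ i ∈ Finset.univ.erase j, d i * M i j = 1 := by
    rw [Finset.add_sum_erase Finset.univ (fun i => d i * M i j) (Finset.mem_univ j)]
    exact hkey
  have hTnn : 0 ≤ ∑ i ∈ Finset.univ.erase j, |d i * M i j| :=
    Finset.sum_nonneg fun i _ => abs_nonneg _
  have hjj : d j * M j j = 1 + ∑ i ∈ Finset.univ.erase j, |d i * M i j| := by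
    rw [hT, Finset.sum_neg_distrib]
    linarith
  rw [hjj, abs_of_pos (by linarith)]
  linarith
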